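/- For a bivariate polynomial v of degree at most N in each variable, the composed function v ∘ ψ (where ψ is the inverse Duffy map) has square-integrable gradient over the unit triangle if and only if v(x,y) = (1−y)·q(x,y) + c for some polynomial q of degree at most N in x and N−1 in y and a constant c. -/

import Mathlib

set_option maxHeartbeats 1000000

open MeasureTheory MvPolynomial Finset

lemma clm_pair (L : ℝ × ℝ →L[ℝ] ℝ) (a b : ℝ) : L (a, b) = a * L (1, 0) + b * L (0, 1) := by
  have h : (a, b) = a • ((1:ℝ), (0:ℝ)) + b • ((0:ℝ), (1:ℝ)) := by
    simp [Prod.ext_iff]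
  rw [h, map_add, _root_.map_smul, _root_.map_smul]; simp

lemma clm_norm_le (L : ℝ × ℝ →L[ℝ] ℝ) : ‖L‖ ≤ |L (1, 0)| + |L (0, 1)| := by
  refine ContinuousLinearMap.opNorm_le_bound _ (by positivity) fun x => ?_
  have h1 : ‖x.1‖ ≤ ‖x‖ := norm_fst_le x
  have h2 : ‖x.2‖ ≤ ‖x‖ := norm_snd_le x
  calc ‖L x‖ = ‖x.1 * L (1,0) + x.2 * L (0,1)‖ := by rw [← clm_pair L x.1 x.2]
    _ ≤ ‖x.1‖ * ‖L (1,0)‖ + ‖x.2‖ * ‖L (0,1)‖ := by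
        refine (norm_add_le _ _).trans ?_; simp [abs_mul]
    _ ≤ ‖x‖ * ‖L (1,0)‖ + ‖x‖ * ‖L (0,1)‖ := by gcongr
    _ = (|L (1,0)| + |L (0,1)|) * ‖x‖ := by simp [Real.norm_eq_abs]; ring

lemma clm_norm_ge (L : ℝ × ℝ →L[ℝ] ℝ) : |L (1, 0)| ≤ ‖L‖ := by
  have := L.le_opNorm ((1:ℝ), (0:ℝ))
  have hn : ‖((1:ℝ), (0:ℝ))‖ = 1 := by simp [Prod.norm_def]
  simpa [hn] using this

lemma contDiff_eval2 (w : MvPolynomial (Fin 2) ℝ) :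
    ContDiff ℝ ⊤ (fun z : ℝ × ℝ => MvPolynomial.eval ![z.1, z.2] w) := by
  induction w using MvPolynomial.induction_on with
  | C a => simpa using contDiff_const
  | add p q hp hq => simpa using hp.add hq
  | mul_X p i hp =>
      have h : (fun z : ℝ × ℝ => MvPolynomial.eval ![z.1, z.2] (p * X i))
          = fun z => (MvPolynomial.eval ![z.1, z.2] p) * (![z.1, z.2] i) := by
        funext z; simp
      rw [h]
      fin_cases i
      · exact hp.mul (by simpa using contDiff_fst)
      · exact hp.mul (by simpa using contDiff_snd)

lemma duffy_fderiv_apply (F : ℝ × ℝ → ℝ) (hF : ContDiff ℝ ⊤ F) {p : ℝ × ℝ} (hp : p.2 ≠ 1) :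
    fderiv ℝ (fun q : ℝ × ℝ => F (q.1 / (1 - q.2), q.2)) p (1, 0)
      = (fderiv ℝ F (p.1 / (1 - p.2), p.2)) (1, 0) / (1 - p.2) ∧
    fderiv ℝ (fun q : ℝ × ℝ => F (q.1 / (1 - q.2), q.2)) p (0, 1)
      = (p.1 / (1 - p.2) ^ 2) * (fderiv ℝ F (p.1 / (1 - p.2), p.2)) (1, 0)
        + (fderiv ℝ F (p.1 / (1 - p.2), p.2)) (0, 1) := by
  have hden : (1:ℝ) - p.2 ≠ 0 := sub_ne_zero.2 (Ne.symm hp)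
  have hd : HasFDerivAt (fun q : ℝ × ℝ => 1 - q.2)
      (0 - ContinuousLinearMap.snd ℝ ℝ ℝ) p := (hasFDerivAt_const 1 p).sub hasFDerivAt_snd
  have hinv : HasFDerivAt (fun q : ℝ × ℝ => (1 - q.2)⁻¹)
      ((-ContinuousLinearMap.mulLeftRight ℝ ℝ (1 - p.2)⁻¹ (1 - p.2)⁻¹).comp
        (0 - ContinuousLinearMap.snd ℝ ℝ ℝ)) p :=
    (hasFDerivAt_inv' hden).comp p hd
  have hmul : HasFDerivAt (fun q : ℝ × ℝ => q.1 * (1 - q.2)⁻¹)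
      (p.1 • ((-ContinuousLinearMap.mulLeftRight ℝ ℝ (1 - p.2)⁻¹ (1 - p.2)⁻¹).comp
        (0 - ContinuousLinearMap.snd ℝ ℝ ℝ)) + (1 - p.2)⁻¹ • ContinuousLinearMap.fst ℝ ℝ ℝ) p :=
    hasFDerivAt_fst.mul hinv
  have hh := hmul.prodMk (hasFDerivAt_snd (E := ℝ) (F := ℝ) (𝕜 := ℝ) (p := p))
  have hcomp := ((hF.differentiable (by simp) (p.1 / (1 - p.2), p.2)).hasFDerivAt).comp p
    (by simpa only [div_eq_mul_inv] using hh)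
  have hfd := hcomp.fderiv
  rw [show (F ∘ fun x : ℝ × ℝ => (x.1 * (1 - x.2)⁻¹, x.2))
      = (fun q : ℝ × ℝ => F (q.1 / (1 - q.2), q.2)) from
    funext fun q => by simp [div_eq_mul_inv, Function.comp]] at hfd
  rw [hfd]
  set L := fderiv ℝ F (p.1 / (1 - p.2), p.2) with hL
  have h1 : p.1 / (1 - p.2) = p.1 * (1 - p.2)⁻¹ := div_eq_mul_inv _ _
  constructor
  · simp only [ContinuousLinearMap.comp_apply, ContinuousLinearMap.prod_apply,
      ContinuousLinearMap.add_apply, ContinuousLinearMap.smul_apply,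
      ContinuousLinearMap.sub_apply, ContinuousLinearMap.neg_apply,
      ContinuousLinearMap.mulLeftRight_apply, ContinuousLinearMap.coe_fst',
      ContinuousLinearMap.coe_snd', ContinuousLinearMap.zero_apply, smul_eq_mul, h1]
    rw [clm_pair L]
    field_simp
    ring
  · simp only [ContinuousLinearMap.comp_apply, ContinuousLinearMap.prod_apply,
      ContinuousLinearMap.add_apply, ContinuousLinearMap.smul_apply,
      ContinuousLinearMap.sub_apply, ContinuousLinearMap.neg_apply,
      ContinuousLinearMap.mulLeftRight_apply, ContinuousLinearMap.coe_fst',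
      ContinuousLinearMap.coe_snd', ContinuousLinearMap.zero_apply, smul_eq_mul, h1]
    rw [clm_pair L]
    field_simp
    ring

lemma eval_decomp (q : MvPolynomial (Fin 2) ℝ) (c : ℝ) (z : ℝ × ℝ) :
    MvPolynomial.eval ![z.1, z.2] ((1 - MvPolynomial.X 1) * q + MvPolynomial.C c)
      = (1 - z.2) * MvPolynomial.eval ![z.1, z.2] q + c := by
  simp

lemma fderiv_decomp (q : MvPolynomial (Fin 2) ℝ) (c : ℝ) (z : ℝ × ℝ) :
    fderiv ℝ (fun z : ℝ × ℝ =>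
        MvPolynomial.eval ![z.1, z.2] ((1 - MvPolynomial.X 1) * q + MvPolynomial.C c)) z
      = (1 - z.2) • fderiv ℝ (fun z : ℝ × ℝ => MvPolynomial.eval ![z.1, z.2] q) z
        + (MvPolynomial.eval ![z.1, z.2] q) • (0 - ContinuousLinearMap.snd ℝ ℝ ℝ) := by
  have hFq := contDiff_eval2 q
  have hd : HasFDerivAt (fun w : ℝ × ℝ => 1 - w.2)
      (0 - ContinuousLinearMap.snd ℝ ℝ ℝ) z := (hasFDerivAt_const 1 z).sub hasFDerivAt_snd
  have hq : HasFDerivAt (fun w : ℝ × ℝ => MvPolynomial.eval ![w.1, w.2] q)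
      (fderiv ℝ (fun w : ℝ × ℝ => MvPolynomial.eval ![w.1, w.2] q) z) z :=
    (hFq.differentiable (by simp) z).hasFDerivAt
  have hmul := (hd.mul hq).add_const c
  have heq : (fun w : ℝ × ℝ =>
      MvPolynomial.eval ![w.1, w.2] ((1 - MvPolynomial.X 1) * q + MvPolynomial.C c))
      = fun w : ℝ × ℝ => (1 - w.2) * MvPolynomial.eval ![w.1, w.2] q + c := by
    funext w; exact eval_decomp q c w
  rw [heq]; exact hmul.fderiv

lemma measurableT : MeasurableSet {p : ℝ × ℝ | 0 ≤ p.1 ∧ 0 ≤ p.2 ∧ p.1 + p.2 ≤ 1} := by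
  refine MeasurableSet.inter (measurableSet_le measurable_const measurable_fst) ?_
  exact (measurableSet_le measurable_const measurable_snd).inter
    (measurableSet_le (measurable_fst.add measurable_snd) measurable_const)

lemma finiteT : IsFiniteMeasure
    (volume.restrict {p : ℝ × ℝ | 0 ≤ p.1 ∧ 0 ≤ p.2 ∧ p.1 + p.2 ≤ 1}) := by
  constructor
  rw [Measure.restrict_apply_univ]
  refine lt_of_le_of_lt (measure_mono (fun p hp => ?_))
    ((isCompact_Icc (a := ((0:ℝ), (0:ℝ))) (b := ((1:ℝ), (1:ℝ)))).measure_lt_top)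
  obtain ⟨h1, h2, h3⟩ := hp
  simp only [Set.mem_Icc, Prod.le_def]
  refine ⟨⟨h1, h2⟩, ⟨by linarith, by linarith⟩⟩

lemma null_line : (volume : Measure (ℝ × ℝ)) {p : ℝ × ℝ | p.2 = 1} = 0 := by
  have h : {p : ℝ × ℝ | p.2 = 1} = (Set.univ : Set ℝ) ×ˢ ({1} : Set ℝ) := by
    ext p
    simp only [Set.mem_setOf_eq, Set.mem_prod, Set.mem_univ, Set.mem_singleton_iff, true_and]
  rw [h, MeasureTheory.Measure.volume_eq_prod, Measure.prod_prod]
  simp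

lemma memLp_direction (v q : MvPolynomial (Fin 2) ℝ) (c : ℝ)
    (hv : v = (1 - MvPolynomial.X 1) * q + MvPolynomial.C c) :
    MemLp (fderiv ℝ (fun p : ℝ × ℝ => MvPolynomial.eval ![p.1 / (1 - p.2), p.2] v)) 2
      (volume.restrict {p : ℝ × ℝ | 0 ≤ p.1 ∧ 0 ≤ p.2 ∧ p.1 + p.2 ≤ 1}) := by
  subst hv
  set T : Set (ℝ × ℝ) := {p : ℝ × ℝ | 0 ≤ p.1 ∧ 0 ≤ p.2 ∧ p.1 + p.2 ≤ 1} with hT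
  set Fq : ℝ × ℝ → ℝ := fun z => MvPolynomial.eval ![z.1, z.2] q with hFqdef
  obtain ⟨K, hK⟩ := (isCompact_Icc (a := ((0:ℝ), (0:ℝ))) (b := ((1:ℝ), (1:ℝ)))
    ).exists_bound_of_continuousOn (f := fun z => fderiv ℝ Fq z)
    (((contDiff_eval2 q).continuous_fderiv (by simp)).continuousOn)
  obtain ⟨M, hM⟩ := (isCompact_Icc (a := ((0:ℝ), (0:ℝ))) (b := ((1:ℝ), (1:ℝ)))
    ).exists_bound_of_continuousOn (f := Fq) ((contDiff_eval2 q).continuous.continuousOn)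
  haveI := finiteT
  refine MemLp.of_bound ((measurable_fderiv ℝ _).aestronglyMeasurable) (K + (K + K + M)) ?_
  have hae1 : ∀ᵐ p ∂(volume.restrict T), p ∈ T := ae_restrict_mem measurableT
  have hae2 : ∀ᵐ p ∂(volume.restrict T), p.2 ≠ 1 := by
    refine Filter.Eventually.filter_mono (ae_mono Measure.restrict_le_self) ?_
    rw [Filter.eventually_iff, mem_ae_iff]
    convert null_line using 2
    ext p; simp
  filter_upwards [hae1, hae2] with p hpT hp2
  obtain ⟨hx0, hy0, hxy⟩ := hpT
  have hy1 : p.2 < 1 := lt_of_le_of_ne (by linarith) hp2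
  have hden : (0:ℝ) < 1 - p.2 := by linarith
  have hu0 : 0 ≤ p.1 / (1 - p.2) := div_nonneg hx0 hden.le
  have hu1 : p.1 / (1 - p.2) ≤ 1 := (div_le_one hden).2 (by linarith)
  have hz : ((p.1 / (1 - p.2), p.2) : ℝ × ℝ) ∈ Set.Icc ((0:ℝ), (0:ℝ)) ((1:ℝ), (1:ℝ)) := by
    simp only [Set.mem_Icc, Prod.le_def]
    exact ⟨⟨hu0, hy0⟩, ⟨hu1, by linarith⟩⟩
  obtain ⟨h1, h2⟩ := duffy_fderiv_apply _ (contDiff_eval2 ((1 - MvPolynomial.X 1) * q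
    + MvPolynomial.C c)) hp2
  have hKz := hK (p.1 / (1 - p.2), p.2) hz
  have hMz := hM (p.1 / (1 - p.2), p.2) hz
  set A := fderiv ℝ Fq (p.1 / (1 - p.2), p.2) (1, 0) with hA
  set B := fderiv ℝ Fq (p.1 / (1 - p.2), p.2) (0, 1) with hB
  have hAK : |A| ≤ K := by
    have h := (fderiv ℝ Fq (p.1 / (1 - p.2), p.2)).le_opNorm ((1:ℝ), (0:ℝ))
    have hn : ‖((1:ℝ), (0:ℝ))‖ = 1 := by simp [Prod.norm_def]
    rw [hn, mul_one] at h
    exact le_trans h hKz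
  have hBK : |B| ≤ K := by
    have h := (fderiv ℝ Fq (p.1 / (1 - p.2), p.2)).le_opNorm ((0:ℝ), (1:ℝ))
    have hn : ‖((0:ℝ), (1:ℝ))‖ = 1 := by simp [Prod.norm_def]
    rw [hn, mul_one] at h
    exact le_trans h hKz
  have hMz' : |Fq (p.1 / (1 - p.2), p.2)| ≤ M := hMz
  rw [fderiv_decomp q c (p.1 / (1 - p.2), p.2)] at h1 h2
  simp only [ContinuousLinearMap.add_apply, ContinuousLinearMap.smul_apply,
    ContinuousLinearMap.sub_apply, ContinuousLinearMap.zero_apply,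
    ContinuousLinearMap.coe_snd', smul_eq_mul, ← hA, ← hB] at h1 h2
  have h1' : fderiv ℝ (fun q_1 : ℝ × ℝ => MvPolynomial.eval ![q_1.1 / (1 - q_1.2), q_1.2]
      ((1 - MvPolynomial.X 1) * q + MvPolynomial.C c)) p (1, 0) = A := by
    rw [h1]; field_simp; rw [mul_zero, zero_mul, add_zero]
  have h2' : fderiv ℝ (fun q_1 : ℝ × ℝ => MvPolynomial.eval ![q_1.1 / (1 - q_1.2), q_1.2]
      ((1 - MvPolynomial.X 1) * q + MvPolynomial.C c)) p (0, 1)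
      = (p.1 / (1 - p.2)) * A + (1 - p.2) * B - Fq (p.1 / (1 - p.2), p.2) := by
    rw [h2]; field_simp; ring
  refine le_trans (clm_norm_le _) ?_
  rw [h1', h2']
  have ht1 : |(p.1 / (1 - p.2)) * A| ≤ K := by
    rw [abs_mul]
    have : |p.1 / (1 - p.2)| ≤ 1 := abs_le.2 ⟨by linarith, hu1⟩
    nlinarith [abs_nonneg A]
  have ht2 : |(1 - p.2) * B| ≤ K := by
    rw [abs_mul]
    have h12 : |1 - p.2| ≤ 1 := abs_le.2 ⟨by linarith, by linarith⟩
    nlinarith [abs_nonneg B]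
  have htri : |(p.1 / (1 - p.2)) * A + (1 - p.2) * B - Fq (p.1 / (1 - p.2), p.2)|
      ≤ |(p.1 / (1 - p.2)) * A| + |(1 - p.2) * B| + |Fq (p.1 / (1 - p.2), p.2)| := by
    calc |(p.1 / (1 - p.2)) * A + (1 - p.2) * B - Fq (p.1 / (1 - p.2), p.2)|
        ≤ |(p.1 / (1 - p.2)) * A + (1 - p.2) * B| + |Fq (p.1 / (1 - p.2), p.2)| :=
          abs_sub _ _
      _ ≤ |(p.1 / (1 - p.2)) * A| + |(1 - p.2) * B| + |Fq (p.1 / (1 - p.2), p.2)| := by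
          have := abs_add_le ((p.1 / (1 - p.2)) * A) ((1 - p.2) * B)
          linarith
  linarith

lemma decomp_of_const (N : ℕ) (v : MvPolynomial (Fin 2) ℝ)
    (hv0 : v.degreeOf 0 ≤ N) (hv1 : v.degreeOf 1 ≤ N)
    (hB : ∀ x : ℝ, MvPolynomial.eval ![x, 1] v = MvPolynomial.eval ![0, 1] v) :
    ∃ (q : MvPolynomial (Fin 2) ℝ) (c : ℝ),
      q.degreeOf 0 ≤ N ∧ q.degreeOf 1 ≤ N - 1 ∧
      v = (1 - MvPolynomial.X 1) * q + MvPolynomial.C c := by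
  classical
  set c : ℝ := MvPolynomial.eval ![0, 1] v with hc
  set q : MvPolynomial (Fin 2) ℝ :=
    -(∑ m ∈ v.support, (MvPolynomial.coeff m v) •
      ((MvPolynomial.X 0 : MvPolynomial (Fin 2) ℝ) ^ (m 0) *
        ∑ k ∈ Finset.range (m 1), (MvPolynomial.X 1 : MvPolynomial (Fin 2) ℝ) ^ k)) with hq
  refine ⟨q, c, ?_, ?_, ?_⟩
  · -- degreeOf 0 q ≤ N
    rw [hq, show ∀ p : MvPolynomial (Fin 2) ℝ, degreeOf 0 (-p) = degreeOf 0 p from fun p => by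
      rw [degreeOf_eq_sup, degreeOf_eq_sup, support_neg]]
    refine le_trans (degreeOf_sum_le _ _ _) (Finset.sup_le fun m hm => ?_)
    have h1 : degreeOf 0 ((MvPolynomial.coeff m v) •
        ((MvPolynomial.X 0 : MvPolynomial (Fin 2) ℝ) ^ (m 0) *
          ∑ k ∈ Finset.range (m 1), (MvPolynomial.X 1 : MvPolynomial (Fin 2) ℝ) ^ k))
        ≤ degreeOf 0 ((MvPolynomial.X 0 : MvPolynomial (Fin 2) ℝ) ^ (m 0) *
          ∑ k ∈ Finset.range (m 1), (MvPolynomial.X 1 : MvPolynomial (Fin 2) ℝ) ^ k) := by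
      rw [smul_eq_C_mul]
      refine le_trans (degreeOf_C_mul_le _ _ _) le_rfl
    refine le_trans h1 ?_
    refine le_trans (degreeOf_mul_le _ _ _) ?_
    have h2 : degreeOf 0 ((MvPolynomial.X 0 : MvPolynomial (Fin 2) ℝ) ^ (m 0)) ≤ m 0 := by
      refine le_trans (degreeOf_pow_le _ _ _) ?_
      simp [degreeOf_X]
    have h3 : degreeOf 0 (∑ k ∈ Finset.range (m 1),
        (MvPolynomial.X 1 : MvPolynomial (Fin 2) ℝ) ^ k) = 0 := by
      refine Nat.le_zero.1 (le_trans (degreeOf_sum_le _ _ _) (Finset.sup_le fun k _ => ?_))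
      refine le_trans (degreeOf_pow_le _ _ _) ?_
      simp [degreeOf_X]
    have h4 : m 0 ≤ N := le_trans (monomial_le_degreeOf 0 hm) hv0
    omega
  · -- degreeOf 1 q ≤ N - 1
    rw [hq, show ∀ p : MvPolynomial (Fin 2) ℝ, degreeOf 1 (-p) = degreeOf 1 p from fun p => by
      rw [degreeOf_eq_sup, degreeOf_eq_sup, support_neg]]
    refine le_trans (degreeOf_sum_le _ _ _) (Finset.sup_le fun m hm => ?_)
    have h1 : degreeOf 1 ((MvPolynomial.coeff m v) •
        ((MvPolynomial.X 0 : MvPolynomial (Fin 2) ℝ) ^ (m 0) *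
          ∑ k ∈ Finset.range (m 1), (MvPolynomial.X 1 : MvPolynomial (Fin 2) ℝ) ^ k))
        ≤ degreeOf 1 ((MvPolynomial.X 0 : MvPolynomial (Fin 2) ℝ) ^ (m 0) *
          ∑ k ∈ Finset.range (m 1), (MvPolynomial.X 1 : MvPolynomial (Fin 2) ℝ) ^ k) := by
      rw [smul_eq_C_mul]
      exact degreeOf_C_mul_le _ _ _
    refine le_trans h1 (le_trans (degreeOf_mul_le _ _ _) ?_)
    have h2 : degreeOf 1 ((MvPolynomial.X 0 : MvPolynomial (Fin 2) ℝ) ^ (m 0)) = 0 := by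
      refine Nat.le_zero.1 (le_trans (degreeOf_pow_le _ _ _) ?_)
      simp [degreeOf_X]
    have h3 : degreeOf 1 (∑ k ∈ Finset.range (m 1),
        (MvPolynomial.X 1 : MvPolynomial (Fin 2) ℝ) ^ k) ≤ N - 1 := by
      refine le_trans (degreeOf_sum_le _ _ _) (Finset.sup_le fun k hk => ?_)
      refine le_trans (degreeOf_pow_le _ _ _) ?_
      have hk' : k < m 1 := Finset.mem_range.1 hk
      have hm1 : m 1 ≤ N := le_trans (monomial_le_degreeOf 1 hm) hv1
      have hX : degreeOf 1 (X 1 : MvPolynomial (Fin 2) ℝ) = 1 := by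
        rw [degreeOf_X]; simp
      rw [hX, mul_one]
      omega
    omega
  · -- identity
    apply MvPolynomial.funext
    intro x
    have hqe : MvPolynomial.eval x q
        = -(∑ m ∈ v.support, (MvPolynomial.coeff m v) * (x 0) ^ (m 0) *
            ∑ k ∈ Finset.range (m 1), (x 1) ^ k) := by
      rw [hq, map_neg, map_sum]
      congr 1
      refine Finset.sum_congr rfl fun m _ => ?_
      simp [smul_eq_C_mul, mul_assoc]
    have hve : MvPolynomial.eval x v
        = ∑ m ∈ v.support, (MvPolynomial.coeff m v) * ((x 0) ^ (m 0) * (x 1) ^ (m 1)) := by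
      rw [eval_eq' x v]
      exact Finset.sum_congr rfl fun m _ => by rw [Fin.prod_univ_two]
    have hsum1 : ∑ m ∈ v.support, (MvPolynomial.coeff m v) * (x 0) ^ (m 0) = c := by
      have h := hB (x 0)
      rw [eval_eq' (![x 0, 1]) v] at h
      rw [← h]
      refine Finset.sum_congr rfl fun m _ => ?_
      rw [Fin.prod_univ_two]
      simp
    rw [map_add, map_mul, map_sub, map_one, eval_X, eval_C, hqe, hve]
    have hterm : ∀ m ∈ v.support,
        (1 - x 1) * -((MvPolynomial.coeff m v) * (x 0) ^ (m 0) *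
          ∑ k ∈ Finset.range (m 1), (x 1) ^ k)
        = (MvPolynomial.coeff m v) * ((x 0) ^ (m 0) * (x 1) ^ (m 1))
          - (MvPolynomial.coeff m v) * (x 0) ^ (m 0) := by
      intro m _
      have hg := geom_sum_mul (x 1) (m 1)
      linear_combination ((MvPolynomial.coeff m v) * (x 0) ^ (m 0)) * hg
    have hS : (1 - x 1) * -(∑ m ∈ v.support, MvPolynomial.coeff m v * x 0 ^ m 0 *
        ∑ k ∈ Finset.range (m 1), x 1 ^ k)
        = ∑ m ∈ v.support, (MvPolynomial.coeff m v * (x 0 ^ m 0 * x 1 ^ m 1)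
            - MvPolynomial.coeff m v * x 0 ^ m 0) := by
      rw [mul_neg, Finset.mul_sum, ← Finset.sum_neg_distrib]
      exact Finset.sum_congr rfl fun m hm => by rw [← hterm m hm]; ring
    rw [hS, Finset.sum_sub_distrib, hsum1]
    ring

lemma exists_good_point (v : MvPolynomial (Fin 2) ℝ)
    (hB : ¬ ∀ x : ℝ, MvPolynomial.eval ![x, 1] v = MvPolynomial.eval ![0, 1] v) :
    ∃ u₀ : ℝ, u₀ ∈ Set.Ioo (0:ℝ) 1 ∧
      fderiv ℝ (fun z : ℝ × ℝ => MvPolynomial.eval ![z.1, z.2] v) (u₀, 1) (1, 0) ≠ 0 := by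
  classical
  set Fv : ℝ × ℝ → ℝ := fun z => MvPolynomial.eval ![z.1, z.2] v with hFv
  set A : ℝ × ℝ → ℝ := fun z => fderiv ℝ Fv z (1, 0) with hA
  set θ : Polynomial ℝ := MvPolynomial.eval₂ Polynomial.C ![Polynomial.X, 1] v with hθ
  have heval : ∀ t : ℝ, Polynomial.eval t θ = MvPolynomial.eval ![t, 1] v := by
    intro t
    have h : (Polynomial.evalRingHom t).comp
        (MvPolynomial.eval₂Hom Polynomial.C ![Polynomial.X, 1])
        = (MvPolynomial.eval ![t, 1] : MvPolynomial (Fin 2) ℝ →+* ℝ) := by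
      apply MvPolynomial.ringHom_ext
      · intro r; simp
      · intro i; fin_cases i <;> simp
    calc Polynomial.eval t θ
        = ((Polynomial.evalRingHom t).comp
            (MvPolynomial.eval₂Hom Polynomial.C ![Polynomial.X, 1])) v := rfl
      _ = MvPolynomial.eval ![t, 1] v := by rw [h]
  have hAderiv : ∀ t : ℝ, HasDerivAt (fun s : ℝ => Fv (s, 1)) (A (t, 1)) t := by
    intro t
    have h1 : HasDerivAt (fun s : ℝ => ((s, (1:ℝ)) : ℝ × ℝ)) ((1:ℝ), (0:ℝ)) t :=
      (hasDerivAt_id t).prodMk (hasDerivAt_const t 1)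
    have h2 : HasFDerivAt Fv (fderiv ℝ Fv (t, 1)) (t, 1) :=
      ((contDiff_eval2 v).differentiable (by simp) _).hasFDerivAt
    exact h2.comp_hasDerivAt t h1
  have hpoly : ∀ t : ℝ, A (t, 1) = Polynomial.eval t (Polynomial.derivative θ) := by
    intro t
    have h3 : HasDerivAt (fun s : ℝ => Polynomial.eval s θ)
        (Polynomial.eval t (Polynomial.derivative θ)) t := θ.hasDerivAt t
    have h4 : (fun s : ℝ => Polynomial.eval s θ) = fun s : ℝ => Fv (s, 1) :=
      funext fun s => heval s
    rw [h4] at h3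
    exact (hAderiv t).unique h3
  have hne : Polynomial.derivative θ ≠ 0 := by
    intro h0
    apply hB
    intro x
    have hconst : ∀ a b : ℝ, Fv (a, 1) = Fv (b, 1) := by
      intro a b
      exact is_const_of_deriv_eq_zero (f := fun s : ℝ => Fv (s, 1))
        (fun s => (hAderiv s).differentiableAt)
        (fun s => by rw [(hAderiv s).deriv, hpoly s, h0]; simp) a b
    exact hconst x 0
  have hfin := Polynomial.finite_setOf_isRoot hne
  have hinf : (Set.Ioo (0:ℝ) 1).Infinite := Set.Ioo_infinite (by norm_num)
  obtain ⟨u₀, hu⟩ := (hinf.diff hfin).nonempty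
  refine ⟨u₀, hu.1, ?_⟩
  have : A (u₀, 1) ≠ 0 := by
    rw [hpoly u₀]
    exact hu.2
  exact this

lemma not_memLp (v : MvPolynomial (Fin 2) ℝ)
    (hB : ¬ ∀ x : ℝ, MvPolynomial.eval ![x, 1] v = MvPolynomial.eval ![0, 1] v) :
    ¬ MemLp (fderiv ℝ (fun p : ℝ × ℝ => MvPolynomial.eval ![p.1 / (1 - p.2), p.2] v)) 2
      (volume.restrict {p : ℝ × ℝ | 0 ≤ p.1 ∧ 0 ≤ p.2 ∧ p.1 + p.2 ≤ 1}) := by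
  intro hmem
  classical
  set T : Set (ℝ × ℝ) := {p : ℝ × ℝ | 0 ≤ p.1 ∧ 0 ≤ p.2 ∧ p.1 + p.2 ≤ 1} with hT
  set Fv : ℝ × ℝ → ℝ := fun z => MvPolynomial.eval ![z.1, z.2] v with hFv
  set A : ℝ × ℝ → ℝ := fun z => fderiv ℝ Fv z (1, 0) with hA
  set f' := fderiv ℝ (fun p : ℝ × ℝ => MvPolynomial.eval ![p.1 / (1 - p.2), p.2] v) with hf'
  obtain ⟨u₀, hu₀, hA0⟩ := exists_good_point v hB
  have hcontA : Continuous A :=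
    (ContinuousLinearMap.apply ℝ ℝ ((1:ℝ), (0:ℝ))).continuous.comp
      ((contDiff_eval2 v).continuous_fderiv (by simp))
  set ε : ℝ := |A (u₀, 1)| / 2 with hε
  have hεpos : 0 < ε := by
    rw [hε]; have : 0 < |A (u₀, 1)| := abs_pos.2 hA0; linarith
  obtain ⟨δ, hδpos, hball⟩ := Metric.continuousAt_iff.1 hcontA.continuousAt ε hεpos
  set δ₀ : ℝ := min (min (δ / 2) (u₀ / 2)) ((1 - u₀) / 2) with hδ₀
  have hδ₀pos : 0 < δ₀ := by
    rw [hδ₀]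
    refine lt_min (lt_min (by linarith) (by linarith [hu₀.1])) (by linarith [hu₀.2])
  have hδ₀δ : δ₀ < δ := by
    have : δ₀ ≤ δ / 2 := le_trans (min_le_left _ _) (min_le_left _ _)
    linarith
  have hδ₀u : δ₀ ≤ u₀ / 2 := le_trans (min_le_left _ _) (min_le_right _ _)
  have hδ₀u' : δ₀ ≤ (1 - u₀) / 2 := min_le_right _ _
  set S : Set (ℝ × ℝ) := {p : ℝ × ℝ | (1 - δ₀ ≤ p.2 ∧ p.2 < 1) ∧
    (u₀ - δ₀) * (1 - p.2) ≤ p.1 ∧ p.1 ≤ (u₀ + δ₀) * (1 - p.2)} with hS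
  have hSmeas : MeasurableSet S := by
    refine MeasurableSet.inter ?_ ?_
    · exact (measurableSet_le measurable_const measurable_snd).inter
        (measurableSet_lt measurable_snd measurable_const)
    · exact (measurableSet_le (measurable_const.mul (measurable_const.sub measurable_snd))
        measurable_fst).inter (measurableSet_le measurable_fst
        (measurable_const.mul (measurable_const.sub measurable_snd)))
  have hST : S ⊆ T := by
    rintro p ⟨⟨hy1, hy2⟩, hx1, hx2⟩
    have hden : (0:ℝ) < 1 - p.2 := by linarith
    refine ⟨?_, ?_, ?_⟩
    · have h1 : 0 ≤ (u₀ - δ₀) * (1 - p.2) := by nlinarith [hu₀.1]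
      linarith
    · have : δ₀ < 1 := by nlinarith [hu₀.2]
      linarith
    · have h2 : (u₀ + δ₀) * (1 - p.2) ≤ 1 - p.2 := by nlinarith [hu₀.2]
      linarith
  have hlower : ∀ p ∈ S, (ε / (1 - p.2)) ^ 2 ≤ ‖f' p‖ ^ 2 := by
    rintro p ⟨⟨hy1, hy2⟩, hx1, hx2⟩
    have hden : (0:ℝ) < 1 - p.2 := by linarith
    have hp2 : p.2 ≠ 1 := ne_of_lt hy2
    have hu_lb : u₀ - δ₀ ≤ p.1 / (1 - p.2) := (le_div_iff₀ hden).2 hx1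
    have hu_ub : p.1 / (1 - p.2) ≤ u₀ + δ₀ := (div_le_iff₀ hden).2 hx2
    have hdist : dist ((p.1 / (1 - p.2), p.2) : ℝ × ℝ) ((u₀, 1) : ℝ × ℝ) < δ := by
      rw [Prod.dist_eq]
      have d1 : dist (p.1 / (1 - p.2)) u₀ ≤ δ₀ := by
        rw [Real.dist_eq]; exact abs_le.2 ⟨by linarith, by linarith⟩
      have d2 : dist p.2 1 ≤ δ₀ := by
        rw [Real.dist_eq]; exact abs_le.2 ⟨by linarith, by linarith⟩
      exact lt_of_le_of_lt (max_le d1 d2) hδ₀δ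
    have hAz : ε ≤ |A (p.1 / (1 - p.2), p.2)| := by
      have h1 := hball hdist
      rw [Real.dist_eq] at h1
      have h2 : |A (u₀, 1)| - |A (p.1 / (1 - p.2), p.2)|
          ≤ |A (p.1 / (1 - p.2), p.2) - A (u₀, 1)| := by
        have := abs_sub_abs_le_abs_sub (A (u₀, 1)) (A (p.1 / (1 - p.2), p.2))
        rw [abs_sub_comm] at this
        exact this
      rw [hε]
      have := abs_nonneg (A (p.1 / (1 - p.2), p.2))
      linarith
    obtain ⟨h1, _⟩ := duffy_fderiv_apply Fv (contDiff_eval2 v) hp2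
    have heq : f' p (1, 0) = A (p.1 / (1 - p.2), p.2) / (1 - p.2) := h1
    have hineq : ε / (1 - p.2) ≤ ‖f' p‖ := by
      have h3 : ε / (1 - p.2) ≤ |A (p.1 / (1 - p.2), p.2)| / (1 - p.2) := by gcongr
      have h4 : |A (p.1 / (1 - p.2), p.2)| / (1 - p.2) = |f' p (1, 0)| := by
        rw [heq, abs_div, abs_of_pos hden]
      rw [h4] at h3
      exact le_trans h3 (clm_norm_ge _)
    have h0 : 0 ≤ ε / (1 - p.2) := by positivity
    exact pow_le_pow_left₀ h0 hineq 2
  have hmeasf' : Measurable f' := measurable_fderiv ℝ _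
  have hint : Integrable (fun p => ‖f' p‖ ^ 2) (volume.restrict T) :=
    (memLp_two_iff_integrable_sq_norm hmeasf'.aestronglyMeasurable).1 hmem
  set Φ : ℝ × ℝ → ℝ := S.indicator (fun p => (ε / (1 - p.2)) ^ 2) with hΦ
  have hΦmeas : Measurable Φ :=
    Measurable.indicator ((measurable_const.div
      (measurable_const.sub measurable_snd)).pow_const 2) hSmeas
  have hΦnonneg : ∀ p, 0 ≤ Φ p := fun p =>
    Set.indicator_nonneg (fun q _ => by positivity) p
  have hΦle : ∀ p, Φ p ≤ ‖f' p‖ ^ 2 := by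
    intro p
    by_cases hp : p ∈ S
    · rw [hΦ, Set.indicator_of_mem hp]; exact hlower p hp
    · rw [hΦ, Set.indicator_of_notMem hp]; positivity
  have hΦint : Integrable Φ (volume.restrict T) := by
    refine hint.mono hΦmeas.aestronglyMeasurable (Filter.Eventually.of_forall fun p => ?_)
    rw [Real.norm_eq_abs, Real.norm_eq_abs, abs_of_nonneg (hΦnonneg p),
      abs_of_nonneg (by positivity : (0:ℝ) ≤ ‖f' p‖ ^ 2)]
    exact hΦle p
  have hΦTind : T.indicator Φ = Φ := by
    funext p
    by_cases hp : p ∈ T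
    · rw [Set.indicator_of_mem hp]
    · rw [Set.indicator_of_notMem hp, hΦ, Set.indicator_of_notMem (fun hq => hp (hST hq))]
  have hΦint' : Integrable Φ (volume : Measure (ℝ × ℝ)) := by
    rw [← hΦTind]
    exact (integrable_indicator_iff measurableT).2 hΦint
  rw [MeasureTheory.Measure.volume_eq_prod] at hΦint'
  have hJ : Integrable (fun y => ∫ x, Φ (x, y)) (volume : Measure ℝ) :=
    hΦint'.integral_prod_right
  have hJval : ∀ y ∈ Set.Ico (1 - δ₀) (1:ℝ),
      (∫ x, Φ (x, y)) = (2 * δ₀ * ε ^ 2) * (1 - y)⁻¹ := by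
    rintro y ⟨hy1, hy2⟩
    have hden : (0:ℝ) < 1 - y := by linarith
    have hfun : (fun x => Φ (x, y))
        = (Set.Icc ((u₀ - δ₀) * (1 - y)) ((u₀ + δ₀) * (1 - y))).indicator
            (fun _ => (ε / (1 - y)) ^ 2) := by
      funext x
      by_cases hx : x ∈ Set.Icc ((u₀ - δ₀) * (1 - y)) ((u₀ + δ₀) * (1 - y))
      · rw [Set.indicator_of_mem hx, hΦ,
          Set.indicator_of_mem (show ((x, y) : ℝ × ℝ) ∈ S from ⟨⟨hy1, hy2⟩, hx.1, hx.2⟩)]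
      · rw [Set.indicator_of_notMem hx, hΦ, Set.indicator_of_notMem]
        rintro ⟨⟨_, _⟩, h1, h2⟩
        exact hx ⟨h1, h2⟩
    rw [hfun, integral_indicator measurableSet_Icc, setIntegral_const, Real.volume_real_Icc_of_le (by nlinarith),
      smul_eq_mul]
    field_simp
    ring
  have hJint : IntegrableOn (fun y => ∫ x, Φ (x, y)) (Set.Ico (1 - δ₀) 1) volume :=
    hJ.integrableOn
  have hII : IntegrableOn (fun y => (2 * δ₀ * ε ^ 2) * (1 - y)⁻¹)
      (Set.Ico (1 - δ₀) 1) volume :=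
    hJint.congr_fun hJval measurableSet_Ico
  have hII2 : IntegrableOn (fun y => (1 - y)⁻¹) (Set.Ico (1 - δ₀) 1) volume := by
    have h2 := hII.const_mul ((2 * δ₀ * ε ^ 2)⁻¹)
    have heqf : (fun y : ℝ => (2 * δ₀ * ε ^ 2)⁻¹ * ((2 * δ₀ * ε ^ 2) * (1 - y)⁻¹))
        = fun y : ℝ => (1 - y)⁻¹ := by
      funext y
      rw [← mul_assoc, inv_mul_cancel₀ (by positivity), one_mul]
    rwa [heqf] at h2
  have h3 : IntegrableOn (fun y => (1 - y)⁻¹) (Set.Ioc (1 - δ₀) 1) volume :=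
    (integrableOn_Ioc_iff_integrableOn_Ioo (by simp)).2 (hII2.mono_set Set.Ioo_subset_Ico_self)
  have h4 : IntervalIntegrable (fun y => (1 - y)⁻¹) volume (1 - δ₀) 1 :=
    (intervalIntegrable_iff_integrableOn_Ioc_of_le (by linarith)).2 h3
  have h5 : IntervalIntegrable (fun y : ℝ => (y - 1)⁻¹) volume (1 - δ₀) 1 := by
    have heqf : (fun y : ℝ => (y - 1)⁻¹) = fun y : ℝ => -((1 - y)⁻¹) := by
      funext y
      rw [neg_inv, neg_sub]
    rw [heqf]
    exact h4.neg
  rcases intervalIntegrable_sub_inv_iff.1 h5 with h | h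
  · linarith
  · exact h Set.right_mem_uIcc


/-- For a bivariate polynomial `v` of degree at most `N` in each variable, the
composition `v ∘ ψ` with the inverse Duffy map `ψ(x,y) = (x/(1−y), y)` has
square-integrable gradient over the unit right triangle if and only if
`v = (1−y)·q + c` with `q ∈ 𝒬_{N,N−1}` and `c` constant. -/
theorem duffy_H1_characterization (N : ℕ) (v : MvPolynomial (Fin 2) ℝ)
    (hv0 : v.degreeOf 0 ≤ N) (hv1 : v.degreeOf 1 ≤ N) :
    MemLp
        (fderiv ℝ (fun p : ℝ × ℝ => MvPolynomial.eval ![p.1 / (1 - p.2), p.2] v)) 2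
        (volume.restrict {p : ℝ × ℝ | 0 ≤ p.1 ∧ 0 ≤ p.2 ∧ p.1 + p.2 ≤ 1})
      ↔ ∃ (q : MvPolynomial (Fin 2) ℝ) (c : ℝ),
          q.degreeOf 0 ≤ N ∧ q.degreeOf 1 ≤ N - 1 ∧
          v = (1 - MvPolynomial.X 1) * q + MvPolynomial.C c := by
  constructor
  · intro h
    by_cases hBc : ∀ x : ℝ, MvPolynomial.eval ![x, 1] v = MvPolynomial.eval ![0, 1] v
    · exact decomp_of_const N v hv0 hv1 hBc
    · exact absurd h (not_memLp v hBc)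
  · rintro ⟨q, c, _, _, hv⟩
    exact memLp_direction v q c hv
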